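/- For each k : Fin N let V k be a finite-dimensional complex vector space, and for i : ι let f i : (k : Fin N) → (V k →ₗ[ℂ] V k) be families of local operators, with induced endomorphisms S i = PiTensorProduct.map (f i) on T = ⨂[ℂ] k, V k and, for G ⊆ Fin N, restricted endomorphisms S_G i = PiTensorProduct.map (fun k : G => f i k) on T_G = ⨂[ℂ] (k : G), V k. Suppose that for every subset G of Fin N with G ≠ ∅ and G ≠ univ there exist i ≠ j with S_G i ∘ S_G j = −(S_G j ∘ S_G i). Then for every such G there do not exist nonzero u ∈ T_G and v ∈ T_{Gᶜ} such that the vector e_G (u ⊗ₜ v) is fixed by S i for every i, where e_G : T_G ⊗ T_{Gᶜ} ≃ₗ[ℂ] T is the canonical linear equivalence; that is, the subspace of vectors fixed by all S i is genuinely multipartite entangled. -/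

import Mathlib

open scoped TensorProduct
open scoped Classical

lemma aux_tensor_eq_smul {M N : Type*} [AddCommGroup M] [Module ℂ M]
    [AddCommGroup N] [Module ℂ N]
    {u u' : M} {v v' : N} (hu : u ≠ 0) (hv : v ≠ 0)
    (h : u' ⊗ₜ[ℂ] v' = u ⊗ₜ[ℂ] v) : ∃ c : ℂ, c ≠ 0 ∧ u' = c • u := by
  obtain ⟨φ, hφ⟩ : ∃ φ : Module.Dual ℂ N, φ v ≠ 0 := by
    by_contra hc
    push_neg at hc
    exact hv ((Module.forall_dual_apply_eq_zero_iff ℂ v).mp hc)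
  have key : ∀ (x : M) (y : N),
      ((TensorProduct.rid ℂ M).toLinearMap ∘ₗ LinearMap.lTensor M φ) (x ⊗ₜ[ℂ] y) = φ y • x := by
    intro x y; simp [TensorProduct.smul_tmul']
  have h2 : φ v' • u' = φ v • u := by
    have := congrArg ((TensorProduct.rid ℂ M).toLinearMap ∘ₗ LinearMap.lTensor M φ) h
    rwa [key, key] at this
  have hv' : φ v' ≠ 0 := by
    intro h0
    rw [h0, zero_smul] at h2
    exact hu (smul_eq_zero_iff_right hφ |>.mp h2.symm)
  refine ⟨(φ v')⁻¹ * φ v, mul_ne_zero (inv_ne_zero hv') hφ, ?_⟩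
  rw [mul_smul, ← h2, smul_smul, inv_mul_cancel₀ hv', one_smul]

/-- Fact 3: if for every nontrivial bipartition `G|Gᶜ` of the sites two of the
local-operator families anticommute when restricted to `G`, then the subspace of vectors fixed
by all the induced endomorphisms `S i` contains no (nonzero) product vector across any
nontrivial bipartition, i.e. it is genuinely multipartite entangled. -/
theorem stabilized_subspace_genuinely_entangled {N : ℕ} {ι : Type*}
    (V : Fin N → Type*) [∀ k, AddCommGroup (V k)] [∀ k, Module ℂ (V k)]
    [∀ k, FiniteDimensional ℂ (V k)]
    (f : ι → (k : Fin N) → (V k →ₗ[ℂ] V k))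
    (hanti : ∀ G : Set (Fin N), G ≠ ∅ → G ≠ Set.univ →
      ∃ i j : ι, i ≠ j ∧
        (PiTensorProduct.map fun k : G => f i k) ∘ₗ (PiTensorProduct.map fun k : G => f j k) =
          -((PiTensorProduct.map fun k : G => f j k) ∘ₗ
            (PiTensorProduct.map fun k : G => f i k))) :
    ∀ G : Set (Fin N), G ≠ ∅ → G ≠ Set.univ →
      ∀ eG : ((⨂[ℂ] k : G, V k) ⊗[ℂ] (⨂[ℂ] k : (Gᶜ : Set (Fin N)), V k)) ≃ₗ[ℂ] (⨂[ℂ] k, V k),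
        (∀ (a : (k : G) → V k) (b : (k : (Gᶜ : Set (Fin N))) → V k),
          eG (PiTensorProduct.tprod ℂ a ⊗ₜ[ℂ] PiTensorProduct.tprod ℂ b) =
            PiTensorProduct.tprod ℂ fun k : Fin N =>
              if h : k ∈ G then a ⟨k, h⟩ else b ⟨k, h⟩) →
        ¬∃ (u : ⨂[ℂ] k : G, V k) (v : ⨂[ℂ] k : (Gᶜ : Set (Fin N)), V k),
            u ≠ 0 ∧ v ≠ 0 ∧
            ∀ i : ι, PiTensorProduct.map (f i) (eG (u ⊗ₜ[ℂ] v)) = eG (u ⊗ₜ[ℂ] v) := by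
  intro G hG1 hG2 eG heG
  rintro ⟨u, v, hu, hv, hfix⟩
  have hfact : ∀ (i : ι), PiTensorProduct.map (f i) (eG (u ⊗ₜ[ℂ] v)) =
      eG ((PiTensorProduct.map fun k : G => f i k) u ⊗ₜ[ℂ]
          (PiTensorProduct.map fun k : (Gᶜ : Set (Fin N)) => f i k) v) := by
    intro i
    have key : (PiTensorProduct.map (f i)) ∘ₗ eG.toLinearMap =
        eG.toLinearMap ∘ₗ TensorProduct.map (PiTensorProduct.map fun k : G => f i k)
          (PiTensorProduct.map fun k : (Gᶜ : Set (Fin N)) => f i k) := by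
      ext a b
      simp [heG, PiTensorProduct.map_tprod]
      congr 1
      funext k
      split <;> rfl
    exact LinearMap.congr_fun key (u ⊗ₜ[ℂ] v)
  obtain ⟨i, j, hij, hAC⟩ := hanti G hG1 hG2
  have hscal : ∀ (i : ι), ∃ c : ℂ, c ≠ 0 ∧
      (PiTensorProduct.map fun k : G => f i k) u = c • u := by
    intro i
    have h1 : eG ((PiTensorProduct.map fun k : G => f i k) u ⊗ₜ[ℂ]
        (PiTensorProduct.map fun k : (Gᶜ : Set (Fin N)) => f i k) v) = eG (u ⊗ₜ[ℂ] v) := by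
      rw [← hfact i]; exact hfix i
    exact aux_tensor_eq_smul hu hv (eG.injective h1)
  obtain ⟨ci, hci, hciu⟩ := hscal i
  obtain ⟨cj, hcj, hcju⟩ := hscal j
  have hAC' := LinearMap.congr_fun hAC u
  simp only [LinearMap.comp_apply, LinearMap.neg_apply, hciu, hcju, map_smul, smul_smul] at hAC'
  have : (2 * (cj * ci)) • u = 0 := by
    have : (cj * ci) • u + (cj * ci) • u = 0 := by
      nth_rewrite 1 [hAC']
      rw [mul_comm ci cj]
      exact neg_add_cancel _
    rw [two_mul, add_smul]
    exact this
  rcases smul_eq_zero.mp this with h0 | h0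
  · exact (mul_ne_zero two_ne_zero (mul_ne_zero hcj hci)) h0
  · exact hu h0
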